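/- For an i-measure μ : 𝓜 → L(E,F) and a finite nonnegative measure ν : 𝓜 → [0,∞), μ is absolutely continuous with respect to ν (in the ε-δ sense on semivariation) if and only if μ vanishes on all sets on which ν vanishes, i.e., ν(A) = 0 implies μ(A) = 0 for all A ∈ 𝓜. -/

import Mathlib

open Filter Topology ENNReal

/-- A series of bounded operators `∑ Tₙ` is *independently convergent* if
`∑ Tₙ xₙ` converges in norm for every bounded sequence `(xₙ)`. -/
def IndepConv {E F : Type*} [NormedAddCommGroup E] [NormedSpace ℝ E]
    [NormedAddCommGroup F] [NormedSpace ℝ F] (T : ℕ → E →L[ℝ] F) : Prop :=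
  ∀ x : ℕ → E, (∃ C : ℝ, ∀ n, ‖x n‖ ≤ C) →
    ∃ y : F, Tendsto (fun N => ∑ n ∈ Finset.range N, T n (x n)) atTop (𝓝 y)

/-- An *i-measure* is an operator-valued set function which is countably additive in the
strong operator topology, and such that `∑ μ(Aₙ)` is independently convergent for every
sequence of pairwise disjoint measurable sets `(Aₙ)`. -/
def IsIMeasure {Z E F : Type*} [MeasurableSpace Z]
    [NormedAddCommGroup E] [NormedSpace ℝ E] [NormedAddCommGroup F] [NormedSpace ℝ F]
    (μ : Set Z → E →L[ℝ] F) : Prop :=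
  (∀ A : ℕ → Set Z, (∀ n, MeasurableSet (A n)) → Pairwise (Function.onFun Disjoint A) →
    ∀ x : E,
      Tendsto (fun N => ∑ n ∈ Finset.range N, μ (A n) x) atTop (𝓝 (μ (⋃ n, A n) x))) ∧
  (∀ A : ℕ → Set Z, (∀ n, MeasurableSet (A n)) → Pairwise (Function.onFun Disjoint A) →
    IndepConv fun n => μ (A n))

/-- The semivariation `‖μ‖_A` of an operator-valued set function `μ` on a set `A`. -/
noncomputable def semivar {Z E F : Type*} [MeasurableSpace Z]
    [NormedAddCommGroup E] [NormedSpace ℝ E] [NormedAddCommGroup F] [NormedSpace ℝ F]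
    (μ : Set Z → E →L[ℝ] F) (A : Set Z) : ℝ≥0∞ :=
  ⨆ (N : ℕ) (B : ℕ → Set Z) (_ : ∀ n, MeasurableSet (B n)) (_ : ∀ n, B n ⊆ A)
    (_ : Pairwise (Function.onFun Disjoint B)) (x : ℕ → E) (_ : ∀ n, ‖x n‖ ≤ 1),
    ENNReal.ofReal ‖∑ n ∈ Finset.range N, μ (B n) (x n)‖

section Aux

variable {Z E F : Type*} [MeasurableSpace Z]
    [NormedAddCommGroup E] [NormedSpace ℝ E] [NormedAddCommGroup F] [NormedSpace ℝ F]
    {μ : Set Z → E →L[ℝ] F}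

lemma imeas_empty (hμ : IsIMeasure μ) : μ ∅ = 0 := by
  ext x
  have h := hμ.1 (fun _ => (∅ : Set Z)) (fun _ => MeasurableSet.empty)
    (fun i j _ => disjoint_bot_left) x
  have h2 : Tendsto (fun N : ℕ => (∑ n ∈ Finset.range (N+1), μ (∅:Set Z) x)
      - ∑ n ∈ Finset.range N, μ (∅:Set Z) x) atTop (𝓝 (μ (⋃ _ : ℕ, (∅:Set Z)) x
      - μ (⋃ _ : ℕ, (∅:Set Z)) x)) := by
    exact ((h.comp (tendsto_add_atTop_nat 1)).sub h)
  simp only [Finset.sum_range_succ, add_sub_cancel_left, sub_self] at h2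
  simpa using tendsto_nhds_unique tendsto_const_nhds h2

lemma imeas_union (hμ : IsIMeasure μ) {A B : Set Z} (hA : MeasurableSet A)
    (hB : MeasurableSet B) (hd : Disjoint A B) (x : E) :
    μ (A ∪ B) x = μ A x + μ B x := by
  classical
  set P : ℕ → Set Z := fun k => if k = 0 then A else if k = 1 then B else ∅ with hP
  have hPm : ∀ k, MeasurableSet (P k) := by
    intro k; simp only [hP]; split_ifs <;> first | exact hA | exact hB | exact MeasurableSet.empty
  have hPd : Pairwise (Function.onFun Disjoint P) := by
    intro i j hij
    simp only [Function.onFun, hP]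
    split_ifs with h1 h2 h3 h4 h5 <;>
      first
      | (exact absurd rfl (by omega : ¬ (0:ℕ) = 0))
      | exact hd
      | exact hd.symm
      | exact disjoint_bot_left
      | exact disjoint_bot_right
      | omega
  have hU : (⋃ k, P k) = A ∪ B := by
    apply Set.Subset.antisymm
    · intro z hz
      rcases Set.mem_iUnion.1 hz with ⟨k, hk⟩
      simp only [hP] at hk
      split_ifs at hk with h1 h2
      · exact Or.inl hk
      · exact Or.inr hk
      · exact absurd hk (Set.notMem_empty z)
    · intro z hz
      rcases hz with hz | hz
      · exact Set.mem_iUnion.2 ⟨0, by simp [hP, hz]⟩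
      · exact Set.mem_iUnion.2 ⟨1, by simp [hP, hz]⟩
  have h := hμ.1 P hPm hPd x
  rw [hU] at h
  have hconst : ∀ N ≥ 2, (∑ n ∈ Finset.range N, μ (P n) x) = μ A x + μ B x := by
    intro N hN
    induction N with
    | zero => omega
    | succ n ih =>
      rcases Nat.lt_or_ge n 2 with hn | hn
      · interval_cases n
        · omega
        · simp [hP, Finset.sum_range_succ]
      · rw [Finset.sum_range_succ, ih hn]
        have : P n = ∅ := by
          have h0 : n ≠ 0 := by omega
          have h1 : n ≠ 1 := by omega
          simp [hP, h0, h1]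
        simp [this, imeas_empty hμ]
  have h2 : Tendsto (fun _ : ℕ => μ A x + μ B x) atTop (𝓝 (μ (A ∪ B) x)) := by
    apply h.congr'
    filter_upwards [eventually_ge_atTop 2] with N hN
    exact hconst N hN
  exact tendsto_nhds_unique h2 tendsto_const_nhds


lemma imeas_tendsto_zero (hμ : IsIMeasure μ) {C : ℕ → Set Z}
    (hCm : ∀ n, MeasurableSet (C n)) (hCa : Antitone C) (hCe : ⋂ n, C n = ∅) (x : E) :
    Tendsto (fun n => μ (C n) x) atTop (𝓝 0) := by
  set D : ℕ → Set Z := fun k => C k \ C (k+1) with hD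
  have hDm : ∀ k, MeasurableSet (D k) := fun k => (hCm k).diff (hCm (k+1))
  have hDd : Pairwise (Function.onFun Disjoint D) := by
    have key : ∀ i j : ℕ, i < j → Disjoint (D i) (D j) := by
      intro i j hij
      apply Set.disjoint_left.2
      intro z hzi hzj
      exact hzi.2 (hCa (by omega : i + 1 ≤ j) hzj.1)
    intro i j hij
    rcases Nat.lt_or_ge i j with h | h
    · exact key i j h
    · exact (key j i (by omega)).symm
  have hDU : (⋃ k, D k) = C 0 := by
    apply Set.Subset.antisymm
    · exact Set.iUnion_subset fun k => (Set.diff_subset).trans (hCa (Nat.zero_le k))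
    · intro z hz
      by_contra hcon
      have hall : ∀ k, z ∈ C k := by
        intro k
        induction k with
        | zero => exact hz
        | succ n ih =>
          by_contra hnk
          exact hcon (Set.mem_iUnion.2 ⟨n, ih, hnk⟩)
      have : z ∈ ⋂ n, C n := Set.mem_iInter.2 hall
      rw [hCe] at this; exact this
  have h := hμ.1 D hDm hDd x
  rw [hDU] at h
  have key : ∀ n, μ (C n) x = μ (C 0) x - ∑ k ∈ Finset.range n, μ (D k) x := by
    intro n
    induction n with
    | zero => simp
    | succ n ih =>
      have hsplit : C n = C (n+1) ∪ D n := by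
        rw [hD]; simp only []
        rw [Set.union_diff_cancel' (le_refl _) (hCa (by omega))]
      have hdisj : Disjoint (C (n+1)) (D n) := Set.disjoint_left.2 fun z hz hz' => hz'.2 hz
      have := imeas_union hμ (hCm (n+1)) (hDm n) hdisj x
      rw [← hsplit] at this
      rw [Finset.sum_range_succ]
      have : μ (C (n+1)) x = μ (C n) x - μ (D n) x := by rw [this]; abel
      rw [this, ih]; abel
  have h2 : Tendsto (fun n => μ (C 0) x - ∑ k ∈ Finset.range n, μ (D k) x) atTop
      (𝓝 (μ (C 0) x - μ (C 0) x)) := tendsto_const_nhds.sub h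
  rw [sub_self] at h2
  exact h2.congr (fun n => (key n).symm)

lemma le_semivar {A : Set Z} (N : ℕ) (B : ℕ → Set Z) (hBm : ∀ n, MeasurableSet (B n))
    (hBA : ∀ n, B n ⊆ A) (hBd : Pairwise (Function.onFun Disjoint B)) (x : ℕ → E)
    (hx : ∀ n, ‖x n‖ ≤ 1) :
    ENNReal.ofReal ‖∑ n ∈ Finset.range N, μ (B n) (x n)‖ ≤ semivar μ A := by
  unfold semivar
  exact le_iSup_of_le N (le_iSup_of_le B (le_iSup_of_le hBm (le_iSup_of_le hBA
    (le_iSup_of_le hBd (le_iSup_of_le x (le_iSup_of_le hx (le_refl _)))))))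

lemma exists_of_lt_semivar {A : Set Z} {a : ℝ≥0∞} (h : a < semivar μ A) :
    ∃ (N : ℕ) (B : ℕ → Set Z) (x : ℕ → E), (∀ n, MeasurableSet (B n)) ∧ (∀ n, B n ⊆ A) ∧
      Pairwise (Function.onFun Disjoint B) ∧ (∀ n, ‖x n‖ ≤ 1) ∧
      a < ENNReal.ofReal ‖∑ n ∈ Finset.range N, μ (B n) (x n)‖ := by
  unfold semivar at h
  simp only [lt_iSup_iff] at h
  obtain ⟨N, B, hBm, hBA, hBd, x, hx, hlt⟩ := h
  exact ⟨N, B, x, hBm, hBA, hBd, hx, hlt⟩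

lemma semivar_mono {A A' : Set Z} (h : A ⊆ A') : semivar μ A ≤ semivar μ A' := by
  unfold semivar
  apply iSup_le; intro N; apply iSup_le; intro B; apply iSup_le; intro hBm
  apply iSup_le; intro hBA; apply iSup_le; intro hBd; apply iSup_le; intro x
  apply iSup_le; intro hx
  exact le_semivar N B hBm (fun n => (hBA n).trans h) hBd x hx

lemma imeas_step (hμ : IsIMeasure μ) {C : ℕ → Set Z} (hCm : ∀ n, MeasurableSet (C n))
    (hCa : Antitone C) (hCe : ⋂ n, C n = ∅) {r : ℝ} (hr : 0 < r)
    (hs : ∀ n, ENNReal.ofReal r < semivar μ (C n)) (p : ℕ) :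
    ∃ (q N : ℕ) (B : ℕ → Set Z) (x : ℕ → E), p < q ∧ (∀ k, MeasurableSet (B k)) ∧
      (∀ k, B k ⊆ C p \ C q) ∧ Pairwise (Function.onFun Disjoint B) ∧ (∀ k, ‖x k‖ ≤ 1) ∧
      r / 2 < ‖∑ k ∈ Finset.range N, μ (B k) (x k)‖ := by
  obtain ⟨N, B', x, hBm, hBA, hBd, hx, hlt⟩ := exists_of_lt_semivar (hs p)
  have hltr : r < ‖∑ k ∈ Finset.range N, μ (B' k) (x k)‖ :=
    (ENNReal.ofReal_lt_ofReal_iff_of_nonneg hr.le).1 hlt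
  have ht : Tendsto (fun m => ∑ k ∈ Finset.range N, μ (B' k ∩ C m) (x k)) atTop (𝓝 0) := by
    have : Tendsto (fun m => ∑ k ∈ Finset.range N, μ (B' k ∩ C m) (x k)) atTop
        (𝓝 (∑ k ∈ Finset.range N, (0 : F))) := by
      apply tendsto_finset_sum
      intro k _
      apply imeas_tendsto_zero hμ (C := fun m => B' k ∩ C m)
        (fun m => (hBm k).inter (hCm m))
        (fun a b hab => Set.inter_subset_inter_right _ (hCa hab))
      rw [← Set.inter_iInter, hCe, Set.inter_empty]
    simpa using this
  have ht0 : Tendsto (fun m => ‖∑ k ∈ Finset.range N, μ (B' k ∩ C m) (x k)‖) atTop (𝓝 0) := by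
    simpa using ht.norm
  have hev : ∀ᶠ m in atTop, ‖∑ k ∈ Finset.range N, μ (B' k ∩ C m) (x k)‖ < r / 2 :=
    ht0.eventually_lt_const (by linarith)
  obtain ⟨q, hq1, hq2⟩ := ((eventually_gt_atTop p).and hev).exists
  refine ⟨q, N, fun k => B' k \ C q, x, hq1, fun k => (hBm k).diff (hCm q), ?_, ?_, hx, ?_⟩
  · intro k
    exact Set.diff_subset_diff_left (hBA k)
  · intro i j hij
    exact (hBd hij).mono Set.diff_subset Set.diff_subset
  · have hsplit : ∀ k, μ (B' k) (x k) = μ (B' k ∩ C q) (x k) + μ (B' k \ C q) (x k) := by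
      intro k
      have hu : (B' k ∩ C q) ∪ (B' k \ C q) = B' k := Set.inter_union_diff _ _
      have hd : Disjoint (B' k ∩ C q) (B' k \ C q) :=
        Set.disjoint_left.2 fun z hz hz' => hz'.2 hz.2
      calc μ (B' k) (x k) = μ ((B' k ∩ C q) ∪ (B' k \ C q)) (x k) := by rw [hu]
        _ = _ := imeas_union hμ ((hBm k).inter (hCm q)) ((hBm k).diff (hCm q)) hd (x k)
    have heq : ∑ k ∈ Finset.range N, μ (B' k \ C q) (x k) =
        (∑ k ∈ Finset.range N, μ (B' k) (x k)) -
          ∑ k ∈ Finset.range N, μ (B' k ∩ C q) (x k) := by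
      rw [← Finset.sum_sub_distrib]
      apply Finset.sum_congr rfl
      intro k _
      rw [hsplit k]; abel
    rw [heq]
    have hnorm := norm_sub_norm_le (∑ k ∈ Finset.range N, μ (B' k) (x k))
      (∑ k ∈ Finset.range N, μ (B' k ∩ C q) (x k))
    linarith

lemma semivar_exists_le (hμ : IsIMeasure μ) {C : ℕ → Set Z}
    (hCm : ∀ n, MeasurableSet (C n)) (hCa : Antitone C) (hCe : ⋂ n, C n = ∅)
    {ε : ℝ≥0∞} (hε : 0 < ε) : ∃ n, semivar μ (C n) ≤ ε := by
  by_contra hcon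
  push_neg at hcon
  obtain ⟨r, hr0, hrε⟩ : ∃ r : ℝ, 0 < r ∧ ENNReal.ofReal r ≤ ε := by
    rcases eq_or_ne ε ∞ with h | h
    · exact ⟨1, one_pos, by simp [h]⟩
    · exact ⟨ε.toReal, ENNReal.toReal_pos hε.ne' h, by rw [ENNReal.ofReal_toReal h]⟩
  have hsv : ∀ n, ENNReal.ofReal r < semivar μ (C n) := fun n =>
    lt_of_le_of_lt hrε (hcon n)
  choose q N B x hq hBm hBsub hBd hx hbig using imeas_step hμ hCm hCa hCe hr0 hsv
  -- block start indices
  set n : ℕ → ℕ := fun j => Nat.rec 0 (fun _ prev => q prev) j with hn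
  have hnS : ∀ j, n (j + 1) = q (n j) := fun j => rfl
  have hnmono : StrictMono n :=
    strictMono_nat_of_lt_succ fun j => by rw [hnS]; exact hq (n j)
  -- block data
  set Nj : ℕ → ℕ := fun j => N (n j) with hNj
  have hNj1 : ∀ j, 1 ≤ Nj j := by
    intro j
    by_contra h
    have h0 : Nj j = 0 := by omega
    have hb := hbig (n j)
    have h0' : N (n j) = 0 := h0
    rw [h0'] at hb
    simp at hb
    linarith
  -- offsets
  set s : ℕ → ℕ := fun j => ∑ i ∈ Finset.range j, Nj i with hs'
  have hsS : ∀ j, s (j + 1) = s j + Nj j := fun j => Finset.sum_range_succ _ _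
  have hsmonos : StrictMono s := strictMono_nat_of_lt_succ fun j => by
    rw [hsS]; have := hNj1 j; omega
  have hsmono : Monotone s := hsmonos.monotone
  have hsge : ∀ j, j ≤ s j := fun j => by
    calc j = ∑ i ∈ Finset.range j, 1 := by simp
      _ ≤ s j := Finset.sum_le_sum fun i _ => hNj1 i
  have hs0 : s 0 = 0 := rfl
  classical
  -- index decoding
  set J : ℕ → ℕ := fun m => Nat.findGreatest (fun j => s j ≤ m) m with hJ
  have hJ1 : ∀ m, s (J m) ≤ m := by
    intro m
    have h0le : (fun j => s j ≤ m) 0 := by simpa [hs0] using Nat.zero_le m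
    exact Nat.findGreatest_spec (P := fun j => s j ≤ m) (m := 0) (n := m) (Nat.zero_le m) h0le
  have hJ2 : ∀ m, m < s (J m + 1) := by
    intro m
    by_contra h
    push_neg at h
    have hk : J m + 1 ≤ m := le_trans (hsge (J m + 1)) h
    exact Nat.findGreatest_is_greatest (Nat.lt_succ_self _) hk h
  have hJuniq : ∀ j m, s j ≤ m → m < s (j + 1) → J m = j := by
    intro j m h1 h2
    rcases lt_trichotomy (J m) j with h | h | h
    · have : s (J m + 1) ≤ s j := hsmono h
      have := hJ2 m
      omega
    · exact h
    · have : s (j + 1) ≤ s (J m) := hsmono h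
      have := hJ1 m
      omega
  -- global sequences
  set Ag : ℕ → Set Z := fun m => B (n (J m)) (m - s (J m)) with hAg
  set xg : ℕ → E := fun m => x (n (J m)) (m - s (J m)) with hxg
  have hAgm : ∀ m, MeasurableSet (Ag m) := fun m => hBm _ _
  have hAgsub : ∀ m, Ag m ⊆ C (n (J m)) \ C (n (J m + 1)) := by
    intro m
    rw [hnS]
    exact hBsub _ _
  have hAgd : Pairwise (Function.onFun Disjoint Ag) := by
    have key : ∀ m m', J m < J m' → Disjoint (Ag m) (Ag m') := by
      intro m m' hjj
      have h1 : Ag m ⊆ C (n (J m)) \ C (n (J m + 1)) := hAgsub m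
      have h2 : Ag m' ⊆ C (n (J m')) := (hAgsub m').trans Set.diff_subset
      have h3 : C (n (J m')) ⊆ C (n (J m + 1)) := hCa (hnmono.monotone hjj)
      exact Set.disjoint_left.2 fun z hz hz' => (h1 hz).2 (h3 (h2 hz'))
    intro m m' hmm
    rcases lt_trichotomy (J m) (J m') with h | h | h
    · exact key m m' h
    · -- same block
      have hkne : m - s (J m) ≠ m' - s (J m') := by
        have := hJ1 m; have := hJ1 m'
        rw [h] at *
        omega
      have hgoal : Disjoint (B (n (J m)) (m - s (J m))) (B (n (J m')) (m' - s (J m'))) := by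
        rw [h]
        exact hBd (n (J m')) (by rw [h] at hkne; exact hkne)
      exact hgoal
    · exact (key m' m h).symm
  have hxgb : ∀ m, ‖xg m‖ ≤ 1 := fun m => hx _ _
  -- block sums
  have hblock : ∀ j, ∑ m ∈ Finset.Ico (s j) (s (j + 1)), μ (Ag m) (xg m) =
      ∑ k ∈ Finset.range (Nj j), μ (B (n j) k) (x (n j) k) := by
    intro j
    rw [Finset.sum_Ico_eq_sum_range]
    have hlen : s (j + 1) - s j = Nj j := by rw [hsS]; omega
    rw [hlen]
    apply Finset.sum_congr rfl
    intro k hk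
    have hk' : k < Nj j := Finset.mem_range.1 hk
    have hJm : J (s j + k) = j := hJuniq j (s j + k) (by omega) (by rw [hsS]; omega)
    simp only [hAg, hxg, hJm, Nat.add_sub_cancel_left]
  -- independent convergence
  obtain ⟨y, hy⟩ := hμ.2 Ag hAgm hAgd xg ⟨1, hxgb⟩
  have hts : Tendsto s atTop atTop := tendsto_atTop_mono hsge tendsto_id
  have htss : Tendsto (fun j => s (j + 1)) atTop atTop :=
    hts.comp (tendsto_add_atTop_nat 1)
  have hdiff : Tendsto (fun j => (∑ m ∈ Finset.range (s (j + 1)), μ (Ag m) (xg m)) -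
      ∑ m ∈ Finset.range (s j), μ (Ag m) (xg m)) atTop (𝓝 (y - y)) :=
    (hy.comp htss).sub (hy.comp hts)
  rw [sub_self] at hdiff
  have hdiff2 : Tendsto (fun j => ‖∑ m ∈ Finset.Ico (s j) (s (j + 1)), μ (Ag m) (xg m)‖)
      atTop (𝓝 0) := by
    have := hdiff.norm
    simp only [norm_zero] at this
    apply this.congr
    intro j
    rw [Finset.sum_Ico_eq_sub _ (hsmono (Nat.le_succ j))]
  have hge : (r / 2 : ℝ) ≤ 0 := by
    apply ge_of_tendsto hdiff2
    filter_upwards with j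
    rw [hblock j]
    exact (hbig (n j)).le
  linarith

theorem aux_abs_cont_iff {Z E F : Type*} [MeasurableSpace Z]
    [NormedAddCommGroup E] [NormedSpace ℝ E]
    [NormedAddCommGroup F] [NormedSpace ℝ F] [CompleteSpace F]
    (μ : Set Z → E →L[ℝ] F) (hμ : IsIMeasure μ)
    (ν : MeasureTheory.Measure Z) (hν : MeasureTheory.IsFiniteMeasure ν) :
    (∀ ε : ℝ≥0∞, 0 < ε → ∃ δ : ℝ≥0∞, 0 < δ ∧
        ∀ A : Set Z, MeasurableSet A → ν A ≤ δ → semivar μ A ≤ ε) ↔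
      (∀ A : Set Z, MeasurableSet A → ν A = 0 → μ A = 0) := by
  constructor
  · intro h A hA hνA
    have hle : ∀ ε : ℝ≥0∞, 0 < ε → semivar μ A ≤ ε := by
      intro ε hε
      obtain ⟨δ, hδ, hδ2⟩ := h ε hε
      exact hδ2 A hA (by rw [hνA]; exact zero_le)
    have hz : semivar μ A = 0 := by
      refine le_antisymm ?_ zero_le
      refine ENNReal.le_of_forall_pos_le_add fun ε hε _ => ?_
      simpa using hle ε (by exact_mod_cast hε)
    have hunit : ∀ u : E, ‖u‖ ≤ 1 → μ A u = 0 := by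
      intro u hu
      classical
      have := le_semivar (μ := μ) 1 (fun k => if k = 0 then A else ∅)
        (fun k => by split_ifs; exacts [hA, MeasurableSet.empty])
        (fun k => by split_ifs; exacts [subset_rfl, Set.empty_subset A])
        (by
          intro i j hij
          unfold Function.onFun
          dsimp only
          split_ifs with h1 h2 h3
          · omega
          · exact disjoint_bot_right
          · exact disjoint_bot_left
          · exact disjoint_bot_left)
        (fun k => if k = 0 then u else 0)
        (fun k => by split_ifs; exacts [hu, by simp])
      rw [hz] at this
      simp only [Finset.range_one, Finset.sum_singleton, if_pos rfl] at this
      have h0 : ‖μ A u‖ ≤ 0 := ENNReal.ofReal_eq_zero.1 (le_antisymm this zero_le)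
      exact norm_le_zero_iff.1 h0
    ext x
    rcases eq_or_ne x 0 with rfl | hx
    · simp
    · have hn : ‖x‖ ≠ 0 := norm_ne_zero_iff.2 hx
      have hu : ‖(‖x‖⁻¹ • x)‖ ≤ 1 := by
        rw [norm_smul, norm_inv, norm_norm, inv_mul_cancel₀ hn]
      have h0 := hunit _ hu
      have : μ A x = ‖x‖ • μ A (‖x‖⁻¹ • x) := by
        rw [← map_smul, smul_inv_smul₀ hn]
      rw [this, h0, smul_zero]
      simp
  · intro h ε hε
    by_contra hcon
    push_neg at hcon
    have hδpos : ∀ k : ℕ, (0 : ℝ≥0∞) < 2⁻¹ ^ k := fun k =>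
      ENNReal.pow_pos (ENNReal.inv_pos.2 (by norm_num)) k
    choose! A hAm hAν hAs using fun k : ℕ => hcon (2⁻¹ ^ k) (hδpos k)
    -- Borel-Cantelli
    have hsum : ∑' i, ν (A i) ≠ ∞ := by
      refine ne_top_of_le_ne_top ?_ (ENNReal.tsum_le_tsum fun i => hAν i)
      rw [ENNReal.tsum_geometric, ENNReal.one_sub_inv_two, inv_inv]
      exact ENNReal.ofNat_ne_top
    set Bs : ℕ → Set Z := fun n => ⋃ i, A (i + n) with hBs
    set Bd : Set Z := ⋂ n, Bs n with hBd
    have hBdlimsup : Bd = limsup A atTop := by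
      rw [limsup_eq_iInf_iSup_of_nat']
      rfl
    have hν0 : ν Bd = 0 := by
      rw [hBdlimsup]
      exact MeasureTheory.measure_limsup_atTop_eq_zero hsum
    have hBsm : ∀ n, MeasurableSet (Bs n) := fun n => MeasurableSet.iUnion fun i => hAm _
    have hBdm : MeasurableSet Bd := MeasurableSet.iInter hBsm
    have hBsa : Antitone Bs := by
      intro a b hab
      refine Set.iUnion_subset fun i => ?_
      refine Set.subset_iUnion_of_subset (i + (b - a)) ?_
      rw [show i + (b - a) + a = i + b by omega]
    have hAB : ∀ n, A n ⊆ Bs n := fun n => Set.subset_iUnion_of_subset 0 (by rw [Nat.zero_add])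
    -- μ vanishes on measurable subsets of Bd
    have hsub0 : ∀ S : Set Z, MeasurableSet S → S ⊆ Bd → μ S = 0 := by
      intro S hS hSB
      refine h S hS (le_antisymm ?_ zero_le)
      rw [← hν0]
      exact MeasureTheory.measure_mono hSB
    set C : ℕ → Set Z := fun n => Bs n \ Bd with hC
    have hCm : ∀ n, MeasurableSet (C n) := fun n => (hBsm n).diff hBdm
    have hCa : Antitone C := fun a b hab => Set.diff_subset_diff_left (hBsa hab)
    have hCe : ⋂ n, C n = ∅ := by
      ext z
      simp only [Set.mem_iInter, Set.mem_empty_iff_false, iff_false]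
      intro hz
      have h1 : z ∈ Bd := Set.mem_iInter.2 fun n => ((hz n).1)
      exact (hz 0).2 h1
    have hkey : ∀ n, semivar μ (Bs n) ≤ semivar μ (C n) := by
      intro n
      unfold semivar
      apply iSup_le; intro N; apply iSup_le; intro Bk; apply iSup_le; intro hBkm
      apply iSup_le; intro hBkA; apply iSup_le; intro hBkd; apply iSup_le; intro x
      apply iSup_le; intro hx
      have heq : ∀ k, μ (Bk k) (x k) = μ (Bk k \ Bd) (x k) := by
        intro k
        have hu : (Bk k ∩ Bd) ∪ (Bk k \ Bd) = Bk k := Set.inter_union_diff _ _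
        have hd : Disjoint (Bk k ∩ Bd) (Bk k \ Bd) :=
          Set.disjoint_left.2 fun z hz hz' => hz'.2 hz.2
        have h0 : μ (Bk k ∩ Bd) = 0 :=
          hsub0 _ ((hBkm k).inter hBdm) Set.inter_subset_right
        calc μ (Bk k) (x k) = μ ((Bk k ∩ Bd) ∪ (Bk k \ Bd)) (x k) := by rw [hu]
          _ = μ (Bk k ∩ Bd) (x k) + μ (Bk k \ Bd) (x k) :=
            imeas_union hμ ((hBkm k).inter hBdm) ((hBkm k).diff hBdm) hd (x k)
          _ = μ (Bk k \ Bd) (x k) := by rw [h0]; simp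
      rw [Finset.sum_congr rfl fun k _ => heq k]
      exact le_semivar N (fun k => Bk k \ Bd) (fun k => (hBkm k).diff hBdm)
        (fun k => Set.diff_subset_diff_left (hBkA k))
        (fun i j hij => (hBkd hij).mono Set.diff_subset Set.diff_subset) x hx
    obtain ⟨n0, hn0⟩ := semivar_exists_le hμ hCm hCa hCe hε
    have hlt : ε < semivar μ (C n0) :=
      lt_of_lt_of_le (hAs n0) ((semivar_mono (hAB n0)).trans (hkey n0))
    exact absurd hn0 (not_le.2 hlt)

end Aux

/-- For an i-measure `μ` and a finite nonnegative measure `ν`, `μ ≪ ν` (in the ε-δ sense on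
the semivariation) iff `μ` vanishes on all sets on which `ν` vanishes. -/
theorem iMeasure_absolutelyContinuous_iff {Z E F : Type*} [MeasurableSpace Z]
    [NormedAddCommGroup E] [NormedSpace ℝ E]
    [NormedAddCommGroup F] [NormedSpace ℝ F] [CompleteSpace F]
    (μ : Set Z → E →L[ℝ] F) (hμ : IsIMeasure μ)
    (ν : MeasureTheory.Measure Z) (hν : MeasureTheory.IsFiniteMeasure ν) :
    (∀ ε : ℝ≥0∞, 0 < ε → ∃ δ : ℝ≥0∞, 0 < δ ∧
        ∀ A : Set Z, MeasurableSet A → ν A ≤ δ → semivar μ A ≤ ε) ↔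
      (∀ A : Set Z, MeasurableSet A → ν A = 0 → μ A = 0) := by
  exact aux_abs_cont_iff μ hμ ν hν
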